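/- arXiv:1303.6999 — 2 statements merged into one kernel-verified Lean document; each statement's English description precedes it below -/
import Mathlib

section
/- Let (X,d) be a complete separable metric space, (P_t)_{t≥0} a Markov semigroup on X, and λ ∈ ℝ with λ ≠ 0. Assume the Wasserstein contraction W_d(P_t(x,·), P_t(y,·)) ≤ e^{−λt} d(x,y) holds for all x, y ∈ X and t ≥ 0. Suppose there exist x₀ ∈ X and t₀ > 0 such that sup_{t ∈ [0,t₀]} ∫ d(y,x₀) P_t(x₀,dy) < ∞. Then there exist constants C₁, C₂ > 0 such that for every x ∈ X and every t ≥ 0 one has ∫ d(y,x₀) P_t(x,dy) ≤ e^{−λt} (d(x,x₀) + C₁) + C₂. -/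
open MeasureTheory ProbabilityTheory ENNReal NNReal

/-- The set of couplings of two probability measures. -/
def IsCoupling {X : Type*} [MeasurableSpace X] (ρ : Measure (X × X)) (μ ν : Measure X) : Prop :=
  IsProbabilityMeasure ρ ∧ ρ.map Prod.fst = μ ∧ ρ.map Prod.snd = ν

/-- The Wasserstein distance associated to the metric, with values in `[0,∞]`. -/
noncomputable def wassersteinDist {X : Type*} [MeasurableSpace X] [PseudoMetricSpace X]
    (μ ν : Measure X) : ℝ≥0∞ :=
  ⨅ ρ : {ρ : Measure (X × X) // IsCoupling ρ μ ν},
    ∫⁻ p, ENNReal.ofReal (dist p.1 p.2) ∂(ρ : Measure (X × X))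

/-- A Markov semigroup: a family of Markov kernels with `P 0 = δ` and the
Chapman–Kolmogorov property. -/
def IsMarkovSemigroup {X : Type*} [MeasurableSpace X] (P : ℝ≥0 → Kernel X X) : Prop :=
  (∀ t, IsMarkovKernel (P t)) ∧
  (∀ x : X, P 0 x = Measure.dirac x) ∧
  (∀ s t : ℝ≥0, P (t + s) = (P s) ∘ₖ (P t))

/-- Geometric sum bound for ratio < 1. -/
lemma geom_sum_le_lt_one {r : ℝ} (hr0 : 0 ≤ r) (hr1 : r < 1) (n : ℕ) :
    ∑ k ∈ Finset.range n, r ^ k ≤ 1 / (1 - r) := by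
  have h1 : 0 < 1 - r := by linarith
  have h2 : ∑ k ∈ Finset.range n, r ^ k = (1 - r ^ n) / (1 - r) := by
    rw [geom_sum_eq hr1.ne n]
    rw [div_eq_div_iff (by linarith) (by linarith)]
    ring
  rw [h2, div_le_div_iff₀ h1 h1]
  have := pow_nonneg hr0 n
  nlinarith

/-- Geometric sum bound for ratio > 1. -/
lemma geom_sum_le_gt_one {r : ℝ} (hr1 : 1 < r) (n : ℕ) :
    ∑ k ∈ Finset.range n, r ^ k ≤ r ^ n / (r - 1) := by
  have h1 : 0 < r - 1 := by linarith
  rw [geom_sum_eq hr1.ne' n, div_le_div_iff₀ h1 h1]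
  nlinarith

/-- The key real inequality: sum of exponentials bounded by `K * (1 + e^{-λ t})`. -/
lemma exp_sum_bound (lam : ℝ) (hlam : lam ≠ 0) (t₀ : ℝ) (ht₀ : 0 < t₀)
    (s : ℝ) (hs : 0 ≤ s) (n : ℕ) :
    ∑ k ∈ Finset.range n, Real.exp (-lam * (s + k * t₀)) ≤
      (1 / |1 - Real.exp (-lam * t₀)|) * (1 + Real.exp (-lam * (s + n * t₀))) := by
  set r := Real.exp (-lam * t₀) with hr
  set a := Real.exp (-lam * s) with ha
  have hterm : ∀ k : ℕ, Real.exp (-lam * (s + (k : ℝ) * t₀)) = a * r ^ k := by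
    intro k
    rw [← Real.exp_nat_mul, ← Real.exp_add]
    congr 1
    ring
  have hr0 : 0 < r := Real.exp_pos _
  have ha0 : 0 < a := Real.exp_pos _
  have hsum : ∑ k ∈ Finset.range n, Real.exp (-lam * (s + k * t₀))
      = a * ∑ k ∈ Finset.range n, r ^ k := by
    rw [Finset.mul_sum]
    exact Finset.sum_congr rfl fun k _ => hterm k
  have hE : Real.exp (-lam * (s + n * t₀)) = a * r ^ n := hterm n
  have hEpos : 0 < a * r ^ n := mul_pos ha0 (pow_pos hr0 n)
  rcases lt_or_gt_of_ne hlam with hneg | hpos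
  · -- lam < 0 : r > 1
    have hr1 : 1 < r := by
      rw [hr, show (1:ℝ) = Real.exp 0 from (Real.exp_zero).symm]
      exact Real.exp_lt_exp.mpr (by nlinarith)
    have habs : |1 - r| = r - 1 := by
      rw [abs_sub_comm]; exact abs_of_pos (by linarith)
    rw [hsum, hE, habs]
    have hle : a * ∑ k ∈ Finset.range n, r ^ k ≤ a * (r ^ n / (r - 1)) :=
      mul_le_mul_of_nonneg_left (geom_sum_le_gt_one hr1 n) ha0.le
    refine hle.trans ?_
    have h2 : 0 < r - 1 := by linarith
    have h3 : a * (r ^ n / (r - 1)) = (a * r ^ n) / (r - 1) := by ring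
    rw [h3, one_div, inv_mul_eq_div, div_le_div_iff₀ h2 h2]
    nlinarith
  · -- lam > 0 : r < 1, a ≤ 1
    have hr1 : r < 1 := by
      rw [hr, show (1:ℝ) = Real.exp 0 from (Real.exp_zero).symm]
      exact Real.exp_lt_exp.mpr (by nlinarith)
    have ha1 : a ≤ 1 := by
      rw [ha, show (1:ℝ) = Real.exp 0 from (Real.exp_zero).symm]
      exact Real.exp_le_exp.mpr (by nlinarith)
    have habs : |1 - r| = 1 - r := abs_of_pos (by linarith)
    rw [hsum, habs]
    have hle : a * ∑ k ∈ Finset.range n, r ^ k ≤ 1 * (1 / (1 - r)) := by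
      apply mul_le_mul ha1 (geom_sum_le_lt_one hr0.le hr1 n) ?_ (by norm_num)
      exact Finset.sum_nonneg fun k _ => pow_nonneg hr0.le k
    refine hle.trans ?_
    rw [one_mul]
    have hlt : 0 < 1 - r := by linarith
    have h1 : 0 ≤ 1 / (1 - r) := div_nonneg zero_le_one hlt.le
    nlinarith [mul_nonneg h1 hEpos.le]

theorem lyapunov_from_wasserstein_contraction
    {X : Type*} [MeasurableSpace X] [MetricSpace X] [CompleteSpace X]
    [TopologicalSpace.SeparableSpace X] [BorelSpace X]
    (P : ℝ≥0 → Kernel X X) (hP : IsMarkovSemigroup P)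
    (lam : ℝ) (hlam : lam ≠ 0)
    (hcontr : ∀ (x y : X) (t : ℝ≥0),
      wassersteinDist (P t x) (P t y) ≤
        ENNReal.ofReal (Real.exp (-lam * t)) * ENNReal.ofReal (dist x y))
    (x₀ : X) (t₀ : ℝ≥0) (ht₀ : 0 < t₀)
    (hbound : (⨆ t ∈ Set.Icc (0 : ℝ≥0) t₀,
        ∫⁻ y, ENNReal.ofReal (dist y x₀) ∂(P t x₀)) < ∞) :
    ∃ C₁ C₂ : ℝ, 0 < C₁ ∧ 0 < C₂ ∧ ∀ (x : X) (t : ℝ≥0),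
      ∫⁻ y, ENNReal.ofReal (dist y x₀) ∂(P t x) ≤
        ENNReal.ofReal (Real.exp (-lam * t)) *
          (ENNReal.ofReal (dist x x₀) + ENNReal.ofReal C₁) + ENNReal.ofReal C₂ := by
  haveI : SecondCountableTopology X := UniformSpace.secondCountable_of_separable X
  set g : X → ℝ≥0∞ := fun y => ENNReal.ofReal (dist y x₀) with hgdef
  have hg : Measurable g :=
    (continuous_id.dist continuous_const).measurable.ennreal_ofReal
  have hcost : Measurable fun p : X × X => ENNReal.ofReal (dist p.1 p.2) :=
    (continuous_fst.dist continuous_snd).measurable.ennreal_ofReal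
  set f : ℝ≥0 → X → ℝ≥0∞ := fun t x => ∫⁻ y, g y ∂(P t x) with hfdef
  -- the Kantorovich/Lipschitz transfer inequality
  have key : ∀ μ ν : Measure X,
      ∫⁻ y, g y ∂μ ≤ (∫⁻ y, g y ∂ν) + wassersteinDist μ ν := by
    intro μ ν
    rw [wassersteinDist, ENNReal.add_iInf]
    refine le_iInf fun ρ => ?_
    obtain ⟨ρ, hprob, h1, h2⟩ := ρ
    calc ∫⁻ y, g y ∂μ = ∫⁻ p : X × X, g p.1 ∂ρ := by
          rw [← h1, lintegral_map hg measurable_fst]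
      _ ≤ ∫⁻ p : X × X, g p.2 + ENNReal.ofReal (dist p.1 p.2) ∂ρ := by
          refine lintegral_mono fun p => ?_
          rw [hgdef]
          rw [← ENNReal.ofReal_add dist_nonneg dist_nonneg]
          exact ENNReal.ofReal_le_ofReal
            ((dist_triangle p.1 p.2 x₀).trans_eq (add_comm _ _))
      _ = (∫⁻ p : X × X, g p.2 ∂ρ) + ∫⁻ p : X × X, ENNReal.ofReal (dist p.1 p.2) ∂ρ :=
          lintegral_add_left (hg.comp measurable_snd) _
      _ = (∫⁻ y, g y ∂ν) + ∫⁻ p : X × X, ENNReal.ofReal (dist p.1 p.2) ∂ρ := by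
          rw [← h2, lintegral_map hg measurable_snd]
  -- pointwise contraction estimate
  have pointwise : ∀ (u : ℝ≥0) (z : X),
      f u z ≤ f u x₀ + ENNReal.ofReal (Real.exp (-lam * u)) * ENNReal.ofReal (dist z x₀) :=
    fun u z => (key (P u z) (P u x₀)).trans (add_le_add le_rfl (hcontr z x₀ u))
  -- semigroup step
  have step : ∀ u : ℝ≥0,
      f (t₀ + u) x₀ ≤ f u x₀ + ENNReal.ofReal (Real.exp (-lam * u)) * f t₀ x₀ := by
    intro u
    haveI := hP.1 t₀
    have hck : P (t₀ + u) = (P u) ∘ₖ (P t₀) := hP.2.2 u t₀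
    have heq : f (t₀ + u) x₀ = ∫⁻ z, f u z ∂(P t₀ x₀) := by
      rw [hfdef]
      simp only
      rw [hck, Kernel.lintegral_comp (P u) (P t₀) x₀ hg]
    rw [heq]
    calc ∫⁻ z, f u z ∂(P t₀ x₀)
        ≤ ∫⁻ z, f u x₀ + ENNReal.ofReal (Real.exp (-lam * u)) * g z ∂(P t₀ x₀) :=
          lintegral_mono fun z => pointwise u z
      _ = f u x₀ + ENNReal.ofReal (Real.exp (-lam * u)) * f t₀ x₀ := by
          rw [lintegral_add_left measurable_const, lintegral_const, measure_univ, mul_one,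
            lintegral_const_mul _ hg]
  set M : ℝ≥0∞ := ⨆ t ∈ Set.Icc (0 : ℝ≥0) t₀, f t x₀ with hMdef
  have hM : ∀ t : ℝ≥0, t ≤ t₀ → f t x₀ ≤ M := fun t ht =>
    le_biSup (fun u => f u x₀) (Set.mem_Icc.mpr ⟨zero_le, ht⟩)
  -- induction
  have hind : ∀ (n : ℕ) (s : ℝ≥0), s ≤ t₀ →
      f (s + n * t₀) x₀ ≤ M +
        (∑ k ∈ Finset.range n,
          ENNReal.ofReal (Real.exp (-lam * ((s : ℝ) + k * (t₀ : ℝ))))) * M := by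
    intro n
    induction n with
    | zero =>
      intro s hs
      simpa using hM s hs
    | succ n ih =>
      intro s hs
      have harg : s + (↑(n + 1) : ℝ≥0) * t₀ = t₀ + (s + n * t₀) := by
        push_cast
        ring
      have hcast : ((s + n * t₀ : ℝ≥0) : ℝ) = (s : ℝ) + n * (t₀ : ℝ) := by
        push_cast
        ring
      calc f (s + (↑(n + 1) : ℝ≥0) * t₀) x₀ = f (t₀ + (s + n * t₀)) x₀ := by rw [harg]
        _ ≤ f (s + n * t₀) x₀ +
            ENNReal.ofReal (Real.exp (-lam * ((s + n * t₀ : ℝ≥0) : ℝ))) * f t₀ x₀ :=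
            step (s + n * t₀)
        _ ≤ (M + (∑ k ∈ Finset.range n,
              ENNReal.ofReal (Real.exp (-lam * ((s : ℝ) + k * (t₀ : ℝ))))) * M) +
            ENNReal.ofReal (Real.exp (-lam * ((s : ℝ) + n * (t₀ : ℝ)))) * M := by
            rw [hcast]
            exact add_le_add (ih s hs) (mul_le_mul_right (hM t₀ le_rfl) _)
        _ = M + (∑ k ∈ Finset.range (n + 1),
              ENNReal.ofReal (Real.exp (-lam * ((s : ℝ) + k * (t₀ : ℝ))))) * M := by
            rw [Finset.sum_range_succ, add_mul, add_assoc]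
  -- introduce real constants
  have hMtop : M ≠ ∞ := hbound.ne
  set Mr : ℝ := M.toReal with hMr
  have hMreq : M = ENNReal.ofReal Mr := (ENNReal.ofReal_toReal hMtop).symm
  have hMr0 : 0 ≤ Mr := ENNReal.toReal_nonneg
  set r : ℝ := Real.exp (-lam * (t₀ : ℝ)) with hrdef
  have hrne : r ≠ 1 := by
    rw [hrdef, Ne, Real.exp_eq_one_iff]
    have : (t₀ : ℝ) ≠ 0 := by positivity
    intro h
    rcases mul_eq_zero.mp h with h | h
    · exact hlam (neg_eq_zero.mp h)
    · exact this h
  set K : ℝ := 1 / |1 - r| with hKdef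
  have hK0 : 0 < K := by
    rw [hKdef]
    have : 0 < |1 - r| := abs_pos.mpr (sub_ne_zero.mpr (Ne.symm hrne))
    positivity
  refine ⟨Mr * K + 1, Mr * (1 + K) + 1, by positivity, by positivity, ?_⟩
  intro x t
  -- decompose t = s + n * t₀
  set n : ℕ := ⌊(t / t₀ : ℝ≥0)⌋₊ with hn
  have hnt : (n : ℝ≥0) * t₀ ≤ t := by
    have h1 : (n : ℝ≥0) ≤ t / t₀ := Nat.floor_le zero_le
    calc (n : ℝ≥0) * t₀ ≤ (t / t₀) * t₀ := mul_le_mul_left h1 t₀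
      _ = t := div_mul_cancel₀ t ht₀.ne'
  set s : ℝ≥0 := t - n * t₀ with hs
  have hts : s + n * t₀ = t := tsub_add_cancel_of_le hnt
  have hst₀ : s ≤ t₀ := by
    have h1 : t / t₀ < n + 1 := Nat.lt_floor_add_one _
    have h2 : t < ((n : ℝ≥0) + 1) * t₀ := (div_lt_iff₀ ht₀).mp h1
    rw [hs, tsub_le_iff_right]
    calc t ≤ (n + 1) * t₀ := h2.le
      _ = t₀ + n * t₀ := by ring
  -- apply induction and the real inequality
  have hcast2 : ((s + n * t₀ : ℝ≥0) : ℝ) = (s : ℝ) + n * (t₀ : ℝ) := by push_cast; ring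
  have htreal : (t : ℝ) = (s : ℝ) + n * (t₀ : ℝ) := by
    rw [← hts, hcast2]
  set e : ℝ := Real.exp (-lam * (t : ℝ)) with hedef
  have he0 : 0 ≤ e := (Real.exp_pos _).le
  have hsumbound : (∑ k ∈ Finset.range n,
      ENNReal.ofReal (Real.exp (-lam * ((s : ℝ) + k * (t₀ : ℝ)))))
      ≤ ENNReal.ofReal (K * (1 + e)) := by
    rw [← ENNReal.ofReal_sum_of_nonneg (fun k _ => (Real.exp_pos _).le)]
    apply ENNReal.ofReal_le_ofReal
    have := exp_sum_bound lam hlam (t₀ : ℝ) (by exact_mod_cast ht₀) (s : ℝ) s.coe_nonneg n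
    rw [hedef, htreal]
    exact this
  have hfx0 : f t x₀ ≤ ENNReal.ofReal e * ENNReal.ofReal (Mr * K + 1)
      + ENNReal.ofReal (Mr * (1 + K) + 1) := by
    have h1 : f t x₀ ≤ M + ENNReal.ofReal (K * (1 + e)) * M := by
      rw [← hts]
      exact (hind n s hst₀).trans (add_le_add le_rfl (mul_le_mul_left hsumbound M))
    refine h1.trans ?_
    rw [hMreq, ← ENNReal.ofReal_mul (by positivity), ← ENNReal.ofReal_add hMr0 (by positivity)]
    refine le_trans (ENNReal.ofReal_le_ofReal
      (show Mr + K * (1 + e) * Mr ≤ e * (Mr * K + 1) + (Mr * (1 + K) + 1) by nlinarith)) ?_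
    rw [ENNReal.ofReal_add (by positivity) (by positivity), ENNReal.ofReal_mul he0]
  calc f t x ≤ f t x₀ + ENNReal.ofReal e * ENNReal.ofReal (dist x x₀) := pointwise t x
    _ ≤ (ENNReal.ofReal e * ENNReal.ofReal (Mr * K + 1) + ENNReal.ofReal (Mr * (1 + K) + 1))
        + ENNReal.ofReal e * ENNReal.ofReal (dist x x₀) := add_le_add hfx0 le_rfl
    _ = ENNReal.ofReal e *
          (ENNReal.ofReal (dist x x₀) + ENNReal.ofReal (Mr * K + 1)) +
          ENNReal.ofReal (Mr * (1 + K) + 1) := by ring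
end

section
/- Let A₀ be the 2×2 real matrix with rows (−1, 3) and (−1/3, −1), and A₁ the 2×2 real matrix with rows (−1, −1/3) and (3, −1). Define the norms ‖(u₁,u₂)‖₀ = sqrt((u₁/3)² + u₂²) and ‖(u₁,u₂)‖₁ = sqrt(u₁² + (u₂/3)²) on ℝ². Then for each i ∈ {0,1} and every differentiable curve Z : [0,∞) → ℝ² satisfying Z'(t) = A_i Z(t) for all t ≥ 0, one has ‖Z(t)‖_i ≤ e^{−t} ‖Z(0)‖_i for every t ≥ 0. -/
/-- The two matrices of the blow-up example of Section 5.3. -/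
noncomputable def spiralMatrix : Fin 2 → Matrix (Fin 2) (Fin 2) ℝ :=
  ![!![-1, 3; -1/3, -1], !![-1, -1/3; 3, -1]]

/-- The two adapted norms of the blow-up example of Section 5.3. -/
noncomputable def spiralNorm : Fin 2 → (Fin 2 → ℝ) → ℝ :=
  ![fun u => Real.sqrt ((u 0 / 3) ^ 2 + (u 1) ^ 2),
    fun u => Real.sqrt ((u 0) ^ 2 + (u 1 / 3) ^ 2)]

lemma spiral_aux (x y : ℝ → ℝ)
    (hx : ∀ t, 0 ≤ t → HasDerivAt x (-(x t) + 3 * y t) t)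
    (hy : ∀ t, 0 ≤ t → HasDerivAt y (-(x t) / 3 - y t) t) :
    ∀ t, 0 ≤ t →
      Real.sqrt ((x t / 3) ^ 2 + (y t) ^ 2)
        ≤ Real.exp (-t) * Real.sqrt ((x 0 / 3) ^ 2 + (y 0) ^ 2) := by
  set F : ℝ → ℝ := fun t => Real.exp (2 * t) * ((x t / 3) ^ 2 + (y t) ^ 2) with hFdef
  have hF : ∀ t : ℝ, 0 ≤ t → HasDerivAt F 0 t := by
    intro t ht
    have hexp : HasDerivAt (fun t : ℝ => Real.exp (2 * t)) (Real.exp (2 * t) * 2) t := by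
      simpa using ((hasDerivAt_id t).const_mul (2:ℝ)).exp
    have hx2 : HasDerivAt (fun t => (x t / 3) ^ 2)
        (2 * (x t / 3) ^ 1 * ((-(x t) + 3 * y t) / 3)) t :=
      ((hx t ht).div_const 3).pow 2
    have hy2 : HasDerivAt (fun t => (y t) ^ 2)
        (2 * (y t) ^ 1 * (-(x t) / 3 - y t)) t := (hy t ht).pow 2
    have := hexp.mul (hx2.add hy2)
    convert this using 1
    · rfl
    · rfl
    · rfl
    · simp only [Pi.add_apply]
      ring
  intro t ht
  have key : F t = F 0 := by
    rcases eq_or_lt_of_le ht with h | h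
    · rw [← h]
    · have hcont : ContinuousOn F (Set.Icc 0 t) := fun s hs =>
        ((hF s hs.1).continuousAt).continuousWithinAt
      have hderiv : ∀ s ∈ Set.Ico (0:ℝ) t, HasDerivWithinAt F 0 (Set.Ici s) s :=
        fun s hs => (hF s hs.1).hasDerivWithinAt
      exact constant_of_has_deriv_right_zero hcont hderiv t (Set.right_mem_Icc.2 ht)
  have hN : (x t / 3) ^ 2 + (y t) ^ 2
      = Real.exp (-t) ^ 2 * ((x 0 / 3) ^ 2 + (y 0) ^ 2) := by
    have hFt : Real.exp (2 * t) * ((x t / 3) ^ 2 + (y t) ^ 2)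
        = (x 0 / 3) ^ 2 + (y 0) ^ 2 := by
      simpa [hFdef] using key
    have h2 : Real.exp (-t) ^ 2 * Real.exp (2 * t) = 1 := by
      rw [← Real.exp_nat_mul]
      rw [← Real.exp_add]
      norm_num
    calc (x t / 3) ^ 2 + (y t) ^ 2
        = Real.exp (-t) ^ 2 * Real.exp (2 * t) * ((x t / 3) ^ 2 + (y t) ^ 2) := by
          rw [h2]; ring
      _ = Real.exp (-t) ^ 2 * ((x 0 / 3) ^ 2 + (y 0) ^ 2) := by rw [mul_assoc, hFt]
  rw [hN, Real.sqrt_mul (sq_nonneg _), Real.sqrt_sq (Real.exp_pos _).le]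

/-- Each linear flow `Z' = A_i Z` contracts at rate `1` in its adapted norm `‖·‖_i`
(first half of the estimate (curv-spirale)). -/
theorem spiral_flow_contraction
    (i : Fin 2) (Z : ℝ → Fin 2 → ℝ)
    (hZ : ∀ t : ℝ, 0 ≤ t → HasDerivAt Z ((spiralMatrix i).mulVec (Z t)) t) :
    ∀ t : ℝ, 0 ≤ t → spiralNorm i (Z t) ≤ Real.exp (-t) * spiralNorm i (Z 0) := by
  have comp : ∀ t, 0 ≤ t → ∀ j, HasDerivAt (fun s => Z s j)
      ((spiralMatrix i).mulVec (Z t) j) t := by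
    intro t ht j
    exact (hasDerivAt_pi.1 (hZ t ht)) j
  fin_cases i
  · have h0 : ∀ t, 0 ≤ t → HasDerivAt (fun s => Z s 0) (-(Z t 0) + 3 * Z t 1) t := by
      intro t ht
      have := comp t ht 0
      simpa [spiralMatrix, Matrix.mulVec, dotProduct, Fin.sum_univ_two] using this
    have h1 : ∀ t, 0 ≤ t → HasDerivAt (fun s => Z s 1) (-(Z t 0) / 3 - Z t 1) t := by
      intro t ht
      have := comp t ht 1
      simp only [spiralMatrix, Matrix.mulVec, dotProduct, Fin.sum_univ_two] at this
      convert this using 1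
      simp
      ring
    intro t ht
    simpa [spiralNorm] using spiral_aux (fun s => Z s 0) (fun s => Z s 1) h0 h1 t ht
  · have h0 : ∀ t, 0 ≤ t → HasDerivAt (fun s => Z s 1) (-(Z t 1) + 3 * Z t 0) t := by
      intro t ht
      have := comp t ht 1
      simp only [spiralMatrix, Matrix.mulVec, dotProduct, Fin.sum_univ_two] at this
      convert this using 1
      simp
      ring
    have h1 : ∀ t, 0 ≤ t → HasDerivAt (fun s => Z s 0) (-(Z t 1) / 3 - Z t 0) t := by
      intro t ht
      have := comp t ht 0
      simp only [spiralMatrix, Matrix.mulVec, dotProduct, Fin.sum_univ_two] at this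
      convert this using 1
      simp
      ring
    intro t ht
    have := spiral_aux (fun s => Z s 1) (fun s => Z s 0) h0 h1 t ht
    simpa [spiralNorm, add_comm] using this
end
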